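/- Let T be a decorated tree with fl(T) = k free leaves. For any integer i with 1 ≤ i ≤ k, the tree Δ_T(T,i) — obtained by attaching T under a new root vertex and adding 1 to every leaf label except for the last i free leaves (in traversal order) — is again a decorated tree; moreover Π_T(Δ_T(T,i)) = T and fl(Δ_T(T,i)) = i. -/

import Mathlib

/-- Rooted plane trees with integer labels on the leaves. -/
inductive DTree where
  | leaf : ℤ → DTree
  | node : List DTree → DTree

mutual
/-- The list of leaf labels of a tree, in left-to-right (prefix traversal) order. -/
def leafLabels : DTree → List ℤ
  | .leaf l => [l]
  | .node ts => leafLabelsList ts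
def leafLabelsList : List DTree → List ℤ
  | [] => []
  | t :: ts => leafLabels t ++ leafLabelsList ts
end

/-- The three conditions of decorated trees, for a subtree whose root is at depth `d`:
leaf labels are at least -1 and strictly less than the depth of their parent;
every internal node of positive depth `d` has a descendant leaf labeled at most `d - 2`;
and in any direct subtree of an internal node of depth `d`, a leaf labeled `d` is
preceded in traversal order only by leaves labeled at least `d`. -/
inductive DecoAt : DTree → ℕ → Prop where
  | leaf {l : ℤ} {d : ℕ} (h1 : -1 ≤ l) (h2 : l < (d : ℤ) - 1) : DecoAt (.leaf l) d
  | node {ts : List DTree} {d : ℕ} (hne : ts ≠ [])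
      (h2 : 0 < d → ∃ x ∈ leafLabelsList ts, x ≤ (d : ℤ) - 2)
      (h3 : ∀ t' ∈ ts, ∀ a b, leafLabels t' = a ++ (d : ℤ) :: b → ∀ x ∈ a, (d : ℤ) ≤ x)
      (h4 : ∀ t' ∈ ts, DecoAt t' (d + 1)) : DecoAt (.node ts) d

/-- A decorated tree: the root is at depth 0. -/
def IsDeco (T : DTree) : Prop := DecoAt T 0

/-- The number of free leaves (leaves labeled -1). -/
def fl (T : DTree) : ℕ := (leafLabels T).count (-1)

mutual
/-- Increment leaf labels, where the counter `m` is the number of free leaves (from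
the left) that still must be incremented; once it reaches 0, remaining free leaves
are left untouched. Returns the new tree and the remaining counter. -/
def incUpTo : DTree → ℕ → DTree × ℕ
  | .leaf l, m =>
      if l = -1 then (if 0 < m then (.leaf 0, m - 1) else (.leaf (-1), m))
      else (.leaf (l + 1), m)
  | .node ts, m =>
      let p := incList ts m
      (.node p.1, p.2)
def incList : List DTree → ℕ → List DTree × ℕ
  | [], m => ([], m)
  | t :: ts, m =>
      let p := incUpTo t m
      let q := incList ts p.2
      (p.1 :: q.1, q.2)
end

/-- Δ_T(T,i): attach `T` under a new root vertex and add 1 to every leaf label,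
except for the last `i` free leaves (in traversal order). -/
def deltaT (T : DTree) (i : ℕ) : DTree := .node [(incUpTo T (fl T - i)).1]

mutual
/-- Subtract 1 from every non-free leaf label. -/
def decLeaves : DTree → DTree
  | .leaf l => if l = -1 then .leaf (-1) else .leaf (l - 1)
  | .node ts => .node (decList ts)
def decList : List DTree → List DTree
  | [] => []
  | t :: ts => decLeaves t :: decList ts
end

/-- Π_T: remove the root (which has a unique child) and subtract 1 from every
non-free leaf label. -/
def piT : DTree → DTree
  | .node [t] => decLeaves t
  | t => t

/-! ### Auxiliary machinery -/

/-- List-level analogue of `incUpTo`. -/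
def incL : List ℤ → ℕ → List ℤ × ℕ
  | [], m => ([], m)
  | x :: ls, m =>
    if x = -1 then
      if 0 < m then ((0:ℤ) :: (incL ls (m-1)).1, (incL ls (m-1)).2)
      else ((-1:ℤ) :: (incL ls m).1, (incL ls m).2)
    else ((x+1) :: (incL ls m).1, (incL ls m).2)

/-- Pointwise relation between old and new labels. -/
abbrev Rl (x y : ℤ) : Prop := (x = -1 ∧ (y = 0 ∨ y = -1)) ∨ (x ≠ -1 ∧ y = x + 1)

theorem incL_nil (m : ℕ) : incL [] m = ([], m) := rfl

theorem incL_cons₁ {x : ℤ} (hx : x = -1) {m : ℕ} (hm : 0 < m) (ls : List ℤ) :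
    incL (x :: ls) m = ((0:ℤ) :: (incL ls (m-1)).1, (incL ls (m-1)).2) := by
  subst hx; simp [incL, hm]

theorem incL_cons₂ {x : ℤ} (hx : x = -1) {m : ℕ} (hm : ¬ 0 < m) (ls : List ℤ) :
    incL (x :: ls) m = ((-1:ℤ) :: (incL ls m).1, (incL ls m).2) := by
  subst hx; simp [incL, hm]

theorem incL_cons₃ {x : ℤ} (hx : x ≠ -1) (m : ℕ) (ls : List ℤ) :
    incL (x :: ls) m = ((x+1) :: (incL ls m).1, (incL ls m).2) := by
  simp [incL, hx]

theorem incL_forall₂ : ∀ (ls : List ℤ) (m : ℕ), List.Forall₂ Rl ls (incL ls m).1 := by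
  intro ls
  induction ls with
  | nil => intro m; rw [incL_nil]; exact List.Forall₂.nil
  | cons x ls ih =>
    intro m
    by_cases hx : x = -1
    · by_cases hm : 0 < m
      · rw [incL_cons₁ hx hm]
        exact List.Forall₂.cons (Or.inl ⟨hx, Or.inl rfl⟩) (ih (m-1))
      · rw [incL_cons₂ hx hm]
        exact List.Forall₂.cons (Or.inl ⟨hx, Or.inr rfl⟩) (ih m)
    · rw [incL_cons₃ hx]
      exact List.Forall₂.cons (Or.inr ⟨hx, rfl⟩) (ih m)

theorem forall₂_exists_left {R : ℤ → ℤ → Prop} :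
    ∀ {u v : List ℤ}, List.Forall₂ R u v → ∀ y ∈ v, ∃ x ∈ u, R x y := by
  intro u v h
  induction h with
  | nil => simp
  | cons hr _ ih =>
    intro y hy
    rcases List.mem_cons.1 hy with rfl | hy
    · exact ⟨_, List.mem_cons_self, hr⟩
    · obtain ⟨x, hx, hxy⟩ := ih y hy
      exact ⟨x, List.mem_cons_of_mem _ hx, hxy⟩

theorem forall₂_exists_right {R : ℤ → ℤ → Prop} :
    ∀ {u v : List ℤ}, List.Forall₂ R u v → ∀ x ∈ u, ∃ y ∈ v, R x y := by
  intro u v h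
  induction h with
  | nil => simp
  | cons hr _ ih =>
    intro x hx
    rcases List.mem_cons.1 hx with rfl | hx
    · exact ⟨_, List.mem_cons_self, hr⟩
    · obtain ⟨y, hy, hxy⟩ := ih x hx
      exact ⟨y, List.mem_cons_of_mem _ hy, hxy⟩

theorem forall₂_split {R : ℤ → ℤ → Prop} :
    ∀ (a : List ℤ) {u b : List ℤ} {y : ℤ}, List.Forall₂ R u (a ++ y :: b) →
      ∃ a₀ x₀ b₀, u = a₀ ++ x₀ :: b₀ ∧ List.Forall₂ R a₀ a ∧ R x₀ y := by
  intro a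
  induction a with
  | nil =>
    intro u b y h
    cases h with
    | cons hr ht => exact ⟨[], _, _, rfl, List.Forall₂.nil, hr⟩
  | cons z a ih =>
    intro u b y h
    cases h with
    | cons hr ht =>
      obtain ⟨a₀, x₀, b₀, rfl, h1, h2⟩ := ih ht
      exact ⟨_ :: a₀, x₀, b₀, rfl, List.Forall₂.cons hr h1, h2⟩

theorem incL_mem_ge (ls : List ℤ) (m : ℕ) (hls : ∀ x ∈ ls, -1 ≤ x) :
    ∀ y ∈ (incL ls m).1, -1 ≤ y := by
  intro y hy
  obtain ⟨x, hx, hxy⟩ := forall₂_exists_left (incL_forall₂ ls m) y hy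
  rcases hxy with ⟨_, rfl | rfl⟩ | ⟨hne, rfl⟩
  · norm_num
  · norm_num
  · have := hls x hx; omega

theorem incL_exists_le (ls : List ℤ) (m : ℕ) {x c : ℤ} (hx : x ∈ ls) (hxc : x ≤ c)
    (hc : -1 ≤ x) : ∃ y ∈ (incL ls m).1, y ≤ c + 1 := by
  obtain ⟨y, hy, hxy⟩ := forall₂_exists_right (incL_forall₂ ls m) x hx
  refine ⟨y, hy, ?_⟩
  rcases hxy with ⟨hx1, rfl | rfl⟩ | ⟨hne, rfl⟩ <;> omega

/-- Transfer of condition (3) for labels `c ≥ 0`. -/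
theorem incL_h3 (ls : List ℤ) (m : ℕ) {c : ℤ} (hc : 0 ≤ c)
    (hold : ∀ a b, ls = a ++ c :: b → ∀ x ∈ a, c ≤ x) :
    ∀ a b, (incL ls m).1 = a ++ (c + 1) :: b → ∀ y ∈ a, c + 1 ≤ y := by
  intro a b heq y hy
  have h2 := incL_forall₂ ls m
  rw [heq] at h2
  obtain ⟨a₀, x₀, b₀, rfl, ha, hx⟩ := forall₂_split a h2
  have hx0 : x₀ = c := by rcases hx with ⟨h1, h | h⟩ | ⟨h1, h⟩ <;> omega
  have hprev := hold a₀ b₀ (by rw [hx0])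
  obtain ⟨x, hxa, hxy⟩ := forall₂_exists_left ha y hy
  have hxc : c ≤ x := hprev x hxa
  rcases hxy with ⟨h, _⟩ | ⟨_, rfl⟩ <;> omega

theorem incL_zero_not_mem (ls : List ℤ) : (0:ℤ) ∉ (incL ls 0).1 := by
  induction ls with
  | nil => rw [incL_nil]; simp
  | cons x ls ih =>
    by_cases hx : x = -1
    · rw [incL_cons₂ hx (by omega)]
      intro h
      rcases List.mem_cons.1 h with h | h
      · exact absurd h (by norm_num)
      · exact ih h
    · rw [incL_cons₃ hx]
      intro h
      rcases List.mem_cons.1 h with h | h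
      · omega
      · exact ih h

/-- In the new label list, no `-1` occurs before a `0`. -/
theorem incL_h3_zero (ls : List ℤ) (hls : ∀ x ∈ ls, -1 ≤ x) :
    ∀ (m : ℕ) (a b : List ℤ), (incL ls m).1 = a ++ (0:ℤ) :: b → (-1:ℤ) ∉ a := by
  induction ls with
  | nil =>
    intro m a b heq
    rw [incL_nil] at heq
    exact absurd heq (by cases a <;> simp)
  | cons x ls ih =>
    have hls' : ∀ x ∈ ls, -1 ≤ x := fun z hz => hls z (List.mem_cons_of_mem _ hz)
    intro m a b heq
    by_cases hx : x = -1
    · by_cases hm : 0 < m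
      · rw [incL_cons₁ hx hm] at heq
        cases a with
        | nil => simp
        | cons z a' =>
          rw [List.cons_append] at heq
          injection heq with h1 h2
          intro hmem
          rcases List.mem_cons.1 hmem with h | h
          · omega
          · exact ih hls' (m-1) a' b h2 h
      · have hm0 : m = 0 := by omega
        subst hm0
        rw [incL_cons₂ hx hm] at heq
        cases a with
        | nil => simp
        | cons z a' =>
          rw [List.cons_append] at heq
          injection heq with h1 h2
          intro _
          refine incL_zero_not_mem ls ?_
          rw [h2]
          exact List.mem_append_right a' (List.mem_cons_self)
    · rw [incL_cons₃ hx] at heq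
      cases a with
      | nil => simp
      | cons z a' =>
        rw [List.cons_append] at heq
        injection heq with h1 h2
        have hxge : -1 ≤ x := hls x (List.mem_cons_self)
        intro hmem
        rcases List.mem_cons.1 hmem with h | h
        · omega
        · exact ih hls' m a' b h2 h

theorem incL_count (ls : List ℤ) (hls : ∀ x ∈ ls, -1 ≤ x) :
    ∀ m : ℕ, (incL ls m).1.count (-1) = ls.count (-1) - m ∧
      (incL ls m).2 = m - ls.count (-1) := by
  induction ls with
  | nil => intro m; rw [incL_nil]; simp
  | cons x ls ih =>
    have hls' : ∀ x ∈ ls, -1 ≤ x := fun z hz => hls z (List.mem_cons_of_mem _ hz)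
    intro m
    by_cases hx : x = -1
    · by_cases hm : 0 < m
      · have h := ih hls' (m-1)
        rw [incL_cons₁ hx hm]
        subst hx
        refine ⟨?_, ?_⟩ <;> simp [List.count_cons, h.1, h.2] <;> omega
      · have h := ih hls' m
        rw [incL_cons₂ hx hm]
        subst hx
        refine ⟨?_, ?_⟩ <;> simp [List.count_cons, h.1, h.2] <;> omega
    · have hxge : -1 ≤ x := hls x (List.mem_cons_self)
      have h := ih hls' m
      rw [incL_cons₃ hx]
      have hx1 : ¬ (x + 1 = -1) := by omega
      refine ⟨?_, ?_⟩ <;> simp [List.count_cons, hx, hx1, h.1, h.2]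

theorem incL_append (u v : List ℤ) (m : ℕ) :
    incL (u ++ v) m = ((incL u m).1 ++ (incL v (incL u m).2).1, (incL v (incL u m).2).2) := by
  induction u generalizing m with
  | nil => rw [incL_nil]; simp [incL_nil]
  | cons x u ih =>
    by_cases hx : x = -1
    · by_cases hm : 0 < m
      · simp only [List.cons_append, incL_cons₁ hx hm, ih]
      · simp only [List.cons_append, incL_cons₂ hx hm, ih]
    · simp only [List.cons_append, incL_cons₃ hx, ih]

mutual
theorem leafLabels_incUpTo : ∀ (T : DTree) (m : ℕ),
    leafLabels (incUpTo T m).1 = (incL (leafLabels T) m).1 ∧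
    (incUpTo T m).2 = (incL (leafLabels T) m).2
  | .leaf l, m => by
    by_cases hl : l = -1
    · by_cases hm : 0 < m <;> simp [incUpTo, incL, leafLabels, hl, hm]
    · simp [incUpTo, incL, leafLabels, hl]
  | .node ts, m => by
    have h := leafLabels_incList ts m
    exact ⟨by simpa [incUpTo, leafLabels] using h.1, by simpa [incUpTo, leafLabels] using h.2⟩
theorem leafLabels_incList : ∀ (ts : List DTree) (m : ℕ),
    leafLabelsList (incList ts m).1 = (incL (leafLabelsList ts) m).1 ∧
    (incList ts m).2 = (incL (leafLabelsList ts) m).2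
  | [], m => by simp [incList, incL, leafLabelsList]
  | t :: ts, m => by
    have h1 := leafLabels_incUpTo t m
    have h2 := leafLabels_incList ts (incUpTo t m).2
    simp only [incList, leafLabelsList, incL_append]
    rw [h1.1, h2.1, h2.2, h1.2]
    exact ⟨rfl, rfl⟩
end

theorem leafLabels_incUpTo_node (ts : List DTree) (m : ℕ) :
    leafLabels (incUpTo (.node ts) m).1 = (incL (leafLabelsList ts) m).1 := by
  have := leafLabels_incUpTo (.node ts) m
  simpa [leafLabels] using this.1

mutual
theorem decoAt_labels_ge : ∀ (T : DTree) (d : ℕ), DecoAt T d → ∀ x ∈ leafLabels T, -1 ≤ x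
  | .leaf l, d, h => by
    cases h with
    | leaf h1 h2 => simpa [leafLabels] using h1
  | .node ts, d, h => by
    cases h with
    | node hne h2 h3 h4 =>
      simpa [leafLabels] using decoAt_labels_geList ts (d+1) h4
theorem decoAt_labels_geList : ∀ (ts : List DTree) (d : ℕ),
    (∀ t ∈ ts, DecoAt t d) → ∀ x ∈ leafLabelsList ts, -1 ≤ x
  | [], d, h => by simp [leafLabelsList]
  | t :: ts, d, h => by
    simp only [leafLabelsList, List.mem_append]
    rintro x (hx | hx)
    · exact decoAt_labels_ge t d (h t (List.mem_cons_self)) x hx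
    · exact decoAt_labels_geList ts d (fun u hu => h u (List.mem_cons_of_mem _ hu)) x hx
end

mutual
theorem dec_inc : ∀ (T : DTree) (m : ℕ), (∀ x ∈ leafLabels T, -1 ≤ x) →
    decLeaves (incUpTo T m).1 = T
  | .leaf l, m, h => by
    have hl : -1 ≤ l := by simpa [leafLabels] using h
    by_cases hl1 : l = -1
    · by_cases hm : 0 < m <;> simp [incUpTo, decLeaves, hl1, hm]
    · have : ¬ (l + 1 = -1) := by omega
      simp [incUpTo, decLeaves, hl1, this]
  | .node ts, m, h => by
    simp only [incUpTo, decLeaves, DTree.node.injEq]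
    exact dec_incList ts m (by simpa [leafLabels] using h)
theorem dec_incList : ∀ (ts : List DTree) (m : ℕ), (∀ x ∈ leafLabelsList ts, -1 ≤ x) →
    decList (incList ts m).1 = ts
  | [], m, h => by simp [incList, decList]
  | t :: ts, m, h => by
    simp only [leafLabelsList, List.mem_append] at h
    simp only [incList, decList, List.cons.injEq]
    exact ⟨dec_inc t m (fun x hx => h x (Or.inl hx)),
      dec_incList ts (incUpTo t m).2 (fun x hx => h x (Or.inr hx))⟩
end

theorem incList_mem (ts : List DTree) : ∀ (m : ℕ) (t' : DTree), t' ∈ (incList ts m).1 →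
    ∃ t ∈ ts, ∃ m', t' = (incUpTo t m').1 := by
  induction ts with
  | nil => intro m t' h; simp [incList] at h
  | cons t ts ih =>
    intro m t' h
    simp only [incList, List.mem_cons] at h
    rcases h with rfl | h
    · exact ⟨t, List.mem_cons_self, m, rfl⟩
    · obtain ⟨u, hu, m', rfl⟩ := ih _ _ h
      exact ⟨u, List.mem_cons_of_mem _ hu, m', rfl⟩

mutual
theorem inc_deco : ∀ (T : DTree) (d m : ℕ), 1 ≤ d → DecoAt T d →
    DecoAt (incUpTo T m).1 (d + 1)
  | .leaf l, d, m, hd, h => by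
    cases h with
    | leaf h1 h2 =>
      by_cases hl : l = -1
      · by_cases hm : 0 < m
        · simp only [incUpTo, hl, if_pos rfl, if_pos hm]
          exact DecoAt.leaf (by norm_num) (by push_cast; omega)
        · simp only [incUpTo, hl, if_pos rfl, if_neg hm]
          exact DecoAt.leaf (by norm_num) (by push_cast; omega)
      · simp only [incUpTo, if_neg hl]
        exact DecoAt.leaf (by omega) (by push_cast at h2 ⊢; omega)
  | .node ts, d, m, hd, h => by
    cases h with
    | node hne h2 h3 h4 =>
      simp only [incUpTo]
      have hge := decoAt_labels_geList ts (d+1) h4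
      refine DecoAt.node ?_ ?_ ?_ ?_
      · cases ts with
        | nil => exact absurd rfl hne
        | cons t ts => simp [incList]
      · intro _
        obtain ⟨x, hx, hxle⟩ := h2 hd
        have hxge : -1 ≤ x := hge x hx
        rw [(leafLabels_incList ts m).1]
        obtain ⟨y, hy, hyle⟩ := incL_exists_le (leafLabelsList ts) m hx hxle hxge
        exact ⟨y, hy, by push_cast; push_cast at hyle; omega⟩
      · intro t' ht' a b heq x hx
        obtain ⟨t, ht, m', rfl⟩ := incList_mem ts m t' ht'
        rw [(leafLabels_incUpTo t m').1] at heq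
        have hc : (0:ℤ) ≤ (d:ℤ) := by positivity
        have hcast : ((d+1 : ℕ) : ℤ) = (d:ℤ) + 1 := by push_cast; ring
        rw [hcast] at heq ⊢
        exact incL_h3 (leafLabels t) m' hc (h3 t ht) a b heq x hx
      · intro t' ht'
        obtain ⟨t, ht, m', rfl⟩ := incList_mem ts m t' ht'
        exact inc_deco t (d+1) m' (by omega) (h4 t ht)
end

theorem incList_labels_ge (ts : List DTree) (d m : ℕ) (h : ∀ t ∈ ts, DecoAt t d) :
    ∀ y ∈ leafLabelsList (incList ts m).1, -1 ≤ y := by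
  rw [(leafLabels_incList ts m).1]
  exact incL_mem_ge _ m (decoAt_labels_geList ts d h)

theorem stmt3 (T : DTree) (i : ℕ) (hT : IsDeco T) (h1 : 1 ≤ i) (h2 : i ≤ fl T) :
    IsDeco (deltaT T i) ∧ piT (deltaT T i) = T ∧ fl (deltaT T i) = i := by
  have hge : ∀ x ∈ leafLabels T, -1 ≤ x := decoAt_labels_ge T 0 hT
  set m := fl T - i with hm
  have hcount := incL_count (leafLabels T) hge m
  have hcount1 : (incL (leafLabels T) m).1.count (-1) = i := by
    rw [hcount.1]
    have hfl : fl T = (leafLabels T).count (-1) := rfl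
    omega
  -- T must be a node
  obtain ⟨ts, rfl⟩ : ∃ ts, T = .node ts := by
    cases T with
    | leaf l =>
      exfalso
      cases hT with
      | leaf ha hb => omega
    | node ts => exact ⟨ts, rfl⟩
  cases hT with
  | node hne hh2 hh3 hh4 =>
    have hlabels : leafLabels (incUpTo (.node ts) m).1 = (incL (leafLabels (.node ts)) m).1 :=
      (leafLabels_incUpTo _ m).1
    have hgeNew : ∀ y ∈ leafLabels (incUpTo (.node ts) m).1, -1 ≤ y := by
      rw [hlabels]; exact incL_mem_ge _ m hge
    refine ⟨?_, ?_, ?_⟩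
    · -- IsDeco (deltaT T i)
      show DecoAt (.node [(incUpTo (.node ts) m).1]) 0
      refine DecoAt.node (by simp) (by simp) ?_ ?_
      · -- h3 at depth 0 : leaves labeled 0
        intro t' ht' a b heq x hx
        simp only [List.mem_singleton] at ht'
        subst ht'
        rw [hlabels] at heq
        have hnm : (-1:ℤ) ∉ a := incL_h3_zero (leafLabels (.node ts)) hge m a b (by exact_mod_cast heq)
        have hxge : -1 ≤ x := by
          have : x ∈ (incL (leafLabels (.node ts)) m).1 := by
            rw [heq]; exact List.mem_append_left _ hx
          exact incL_mem_ge _ m hge x this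
        have : x ≠ -1 := fun hc => hnm (hc ▸ hx)
        simp only [Nat.cast_zero]
        omega
      · -- unique child is DecoAt _ 1
        intro t' ht'
        simp only [List.mem_singleton] at ht'
        subst ht'
        simp only [incUpTo]
        refine DecoAt.node ?_ ?_ ?_ ?_
        · cases ts with
          | nil => exact absurd rfl hne
          | cons t ts => simp [incList]
        · -- there is a free leaf left
          intro _
          have hpos : 0 < (incL (leafLabels (.node ts)) m).1.count (-1) := by omega
          have hmem : (-1:ℤ) ∈ (incL (leafLabels (.node ts)) m).1 :=
            List.count_pos_iff.1 hpos
          refine ⟨-1, ?_, by norm_num⟩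
          rw [(leafLabels_incList ts m).1]
          simpa [leafLabels] using hmem
        · -- h3 at depth 1
          intro t' ht' a b heq x hx
          obtain ⟨t, ht, m', rfl⟩ := incList_mem ts m t' ht'
          rw [(leafLabels_incUpTo t m').1] at heq
          have h01 : ((1:ℕ):ℤ) = (0:ℤ) + 1 := by norm_num
          rw [h01] at heq ⊢
          refine incL_h3 (leafLabels t) m' le_rfl ?_ a b heq x hx
          have := hh3 t ht
          simpa using this
        · -- children at depth 2
          intro t' ht'
          obtain ⟨t, ht, m', rfl⟩ := incList_mem ts m t' ht'
          exact inc_deco t 1 m' le_rfl (hh4 t ht)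
    · -- piT
      show piT (.node [(incUpTo (.node ts) m).1]) = .node ts
      have : piT (.node [(incUpTo (.node ts) m).1]) = decLeaves (incUpTo (.node ts) m).1 := rfl
      rw [this]
      exact dec_inc _ m hge
    · -- fl
      show fl (.node [(incUpTo (.node ts) m).1]) = i
      unfold fl
      have : leafLabels (DTree.node [(incUpTo (.node ts) m).1]) =
          leafLabels (incUpTo (.node ts) m).1 := by
        simp [leafLabels, leafLabelsList]
      rw [this, hlabels, hcount1]
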